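/- Combining the AUROC bound with the product-measure TV bound: if TV(m,h) = δ and texts are formed by N = nk(1−α) independent machine sequences, then the best achievable AUROC of any detector distinguishing m^{⊗N} from h^{⊗N} is at most 1 − (1/2)(1 − δ)^{2N}. -/

import Mathlib

open MeasureTheory Filter

/-- Total variation distance: sup over measurable sets of |P A - Q A|. -/
noncomputable def tv {S : Type*} [MeasurableSpace S] (P Q : Measure S) : ℝ :=
  ⨆ A : {A : Set S // MeasurableSet A}, |(P A.1).toReal - (Q A.1).toReal|

open Set in
/-- Overlap measure: a common minorant of two probability measures with mass at least
`1 - tv P Q`. -/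
lemma tv_overlap {S : Type*} [MeasurableSpace S] (P Q : Measure S)
    [IsProbabilityMeasure P] [IsProbabilityMeasure Q] :
    ∃ lam : Measure S, lam ≤ P ∧ lam ≤ Q ∧ 1 - tv P Q ≤ (lam Set.univ).toReal := by
  set ρ : Measure S := P + Q with hρ
  have hPρ : P ≪ ρ := Measure.absolutelyContinuous_of_le (Measure.le_add_right le_rfl)
  have hQρ : Q ≪ ρ := Measure.absolutelyContinuous_of_le (Measure.le_add_left le_rfl)
  set f : S → ENNReal := P.rnDeriv ρ with hf
  set g : S → ENNReal := Q.rnDeriv ρ with hg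
  have hfm : Measurable f := Measure.measurable_rnDeriv _ _
  have hgm : Measurable g := Measure.measurable_rnDeriv _ _
  set lam : Measure S := ρ.withDensity (fun x => min (f x) (g x)) with hlam
  have hP : ρ.withDensity f = P := Measure.withDensity_rnDeriv_eq _ _ hPρ
  have hQ : ρ.withDensity g = Q := Measure.withDensity_rnDeriv_eq _ _ hQρ
  have hlP : lam ≤ P := by
    rw [← hP]
    exact withDensity_mono (Filter.Eventually.of_forall fun x => min_le_left _ _)
  have hlQ : lam ≤ Q := by
    rw [← hQ]
    exact withDensity_mono (Filter.Eventually.of_forall fun x => min_le_right _ _)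
  refine ⟨lam, hlP, hlQ, ?_⟩
  set A : Set S := {x | g x < f x} with hA
  have hAm : MeasurableSet A := measurableSet_lt hgm hfm
  -- key identity : P A + lam univ = 1 + Q A
  have hPA : P A = ∫⁻ x in A, f x ∂ρ := by rw [← hP, withDensity_apply _ hAm]
  have hQA : Q A = ∫⁻ x in A, g x ∂ρ := by rw [← hQ, withDensity_apply _ hAm]
  have hlamuniv : lam Set.univ = ∫⁻ x in A, g x ∂ρ + ∫⁻ x in Aᶜ, f x ∂ρ := by
    have h1 : ∫⁻ x in A, min (f x) (g x) ∂ρ = ∫⁻ x in A, g x ∂ρ :=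
      setLIntegral_congr_fun hAm (fun x hx =>
        min_eq_right (le_of_lt hx))
    have h2 : ∫⁻ x in Aᶜ, min (f x) (g x) ∂ρ = ∫⁻ x in Aᶜ, f x ∂ρ :=
      setLIntegral_congr_fun hAm.compl (fun x hx =>
        min_eq_left (not_lt.mp hx))
    rw [hlam, withDensity_apply _ MeasurableSet.univ, Measure.restrict_univ,
      ← lintegral_add_compl _ hAm, h1, h2]
  have hPuniv : (1 : ENNReal) = ∫⁻ x in A, f x ∂ρ + ∫⁻ x in Aᶜ, f x ∂ρ := by
    rw [lintegral_add_compl _ hAm, hf, Measure.lintegral_rnDeriv hPρ, measure_univ]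
  have hkey : P A + lam Set.univ = 1 + Q A := by
    rw [hPA, hlamuniv, hPuniv, hQA]; ring
  -- pass to reals
  have hPAne : P A ≠ ⊤ := measure_ne_top _ _
  have hQAne : Q A ≠ ⊤ := measure_ne_top _ _
  have hlamfin : IsFiniteMeasure lam := isFiniteMeasure_of_le P hlP
  have hlamne : lam Set.univ ≠ ⊤ := measure_ne_top _ _
  have hkeyR : (P A).toReal + (lam Set.univ).toReal = 1 + (Q A).toReal := by
    have := congrArg ENNReal.toReal hkey
    rwa [ENNReal.toReal_add hPAne hlamne, ENNReal.toReal_add (by simp) hQAne,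
      ENNReal.toReal_one] at this
  -- tv bound
  have htv : (P A).toReal - (Q A).toReal ≤ tv P Q := by
    have hbdd : BddAbove (Set.range fun B : {B : Set S // MeasurableSet B} =>
        |(P B.1).toReal - (Q B.1).toReal|) := by
      refine ⟨1, ?_⟩
      rintro x ⟨B, rfl⟩
      have h1 : (P B.1).toReal ≤ 1 := by
        simpa using ENNReal.toReal_mono (by simp) (prob_le_one (μ := P) (s := B.1))
      have h2 : (Q B.1).toReal ≤ 1 := by
        simpa using ENNReal.toReal_mono (by simp) (prob_le_one (μ := Q) (s := B.1))
      have h3 : 0 ≤ (P B.1).toReal := ENNReal.toReal_nonneg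
      have h4 : 0 ≤ (Q B.1).toReal := ENNReal.toReal_nonneg
      rw [abs_sub_le_iff]; constructor <;> linarith
    calc (P A).toReal - (Q A).toReal ≤ |(P A).toReal - (Q A).toReal| := le_abs_self _
      _ ≤ tv P Q := le_ciSup hbdd (⟨A, hAm⟩ : {B : Set S // MeasurableSet B})
  linarith

/-- Monotonicity of product measures. -/
lemma prod_measure_mono {α β : Type*} [MeasurableSpace α] [MeasurableSpace β]
    {μ ν : Measure α} {μ' ν' : Measure β} [SFinite μ'] [SFinite ν']
    (h : μ ≤ ν) (h' : μ' ≤ ν') : μ.prod μ' ≤ ν.prod ν' := by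
  rw [Measure.le_iff]
  intro s hs
  rw [Measure.prod_apply hs, Measure.prod_apply hs]
  calc ∫⁻ x, μ' (Prod.mk x ⁻¹' s) ∂μ
      ≤ ∫⁻ x, ν' (Prod.mk x ⁻¹' s) ∂μ :=
        lintegral_mono fun x => Measure.le_iff'.mp h' _
    _ ≤ ∫⁻ x, ν' (Prod.mk x ⁻¹' s) ∂ν := lintegral_mono' h le_rfl

/-- Monotonicity of `Measure.tprod`. -/
lemma tprod_measure_mono {δ : Type*} {π : δ → Type*} [∀ x, MeasurableSpace (π x)]
    (l : List δ) {μ ν : ∀ i, Measure (π i)} [∀ i, SigmaFinite (μ i)] [∀ i, SigmaFinite (ν i)]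
    (h : ∀ i, μ i ≤ ν i) : Measure.tprod l μ ≤ Measure.tprod l ν := by
  induction l with
  | nil => simp [Measure.tprod_nil]; exact le_rfl
  | cons i l ih =>
    rw [Measure.tprod_cons, Measure.tprod_cons]
    exact prod_measure_mono (h i) ih

/-- Monotonicity of finite product measures. -/
lemma pi_measure_mono {ι : Type*} [Fintype ι] {α : ι → Type*} [∀ i, MeasurableSpace (α i)]
    {μ ν : ∀ i, Measure (α i)} [∀ i, SigmaFinite (μ i)] [∀ i, SigmaFinite (ν i)]
    (h : ∀ i, μ i ≤ ν i) : Measure.pi μ ≤ Measure.pi ν := by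
  haveI : Encodable ι := Fintype.toEncodable ι
  rw [← Measure.pi'_eq_pi, ← Measure.pi'_eq_pi]
  unfold Measure.pi'
  exact Measure.map_mono (tprod_measure_mono _ h)
    (@measurable_tProd_elim' ι α _ (fun a b => Classical.propDecidable (a = b)) _ Encodable.mem_sortedUniv)

/-- AUROC bound in terms of the mass of a common minorant. -/
lemma auroc_le_of_minorant (μ ν lam : Measure ℝ)
    [IsProbabilityMeasure μ] [IsProbabilityMeasure ν]
    (h1 : lam ≤ μ) (h2 : lam ≤ ν) :
    ((μ.prod ν) {p : ℝ × ℝ | p.2 < p.1}).toReal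
      + (1 / 2) * ((μ.prod ν) {p : ℝ × ℝ | p.1 = p.2}).toReal
      ≤ 1 - (1 / 2) * ((lam Set.univ).toReal) ^ 2 := by
  haveI : IsFiniteMeasure lam := isFiniteMeasure_of_le μ h1
  set Sgt : Set (ℝ × ℝ) := {p | p.2 < p.1} with hSgt
  set Slt : Set (ℝ × ℝ) := {p | p.1 < p.2} with hSlt
  set Seq : Set (ℝ × ℝ) := {p | p.1 = p.2} with hSeq
  have hgtm : MeasurableSet Sgt := measurableSet_lt measurable_snd measurable_fst
  have hltm : MeasurableSet Slt := measurableSet_lt measurable_fst measurable_snd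
  have heqm : MeasurableSet Seq := measurableSet_eq_fun measurable_fst measurable_snd
  -- partition of universe
  have hd1 : Disjoint Sgt Slt := by
    rw [Set.disjoint_left]
    intro p hp hp'
    simp only [hSgt, hSlt, Set.mem_setOf_eq] at hp hp'
    exact absurd hp' (not_lt.mpr hp.le)
  have hd2 : Disjoint (Sgt ∪ Slt) Seq := by
    rw [Set.disjoint_left]
    rintro p (hp | hp) hp' <;>
      simp only [hSgt, hSlt, hSeq, Set.mem_setOf_eq] at hp hp'
    · exact absurd hp' (ne_of_gt hp)
    · exact absurd hp' (ne_of_lt hp)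
  have hcover : Sgt ∪ Slt ∪ Seq = Set.univ := by
    ext p
    simp only [hSgt, hSlt, hSeq, Set.mem_union, Set.mem_setOf_eq, Set.mem_univ, iff_true]
    rcases lt_trichotomy p.1 p.2 with hlt | heq | hgt
    · exact Or.inl (Or.inr hlt)
    · exact Or.inr heq
    · exact Or.inl (Or.inl hgt)
  have hpart : ∀ κ : Measure (ℝ × ℝ), κ Set.univ = κ Sgt + κ Slt + κ Seq := by
    intro κ
    rw [← hcover, measure_union hd2 heqm, measure_union hd1 hltm]
  -- swap symmetry for lam.prod lam
  have hswap : (lam.prod lam) Slt = (lam.prod lam) Sgt := by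
    have hpre : Prod.swap ⁻¹' Sgt = Slt := by
      ext p; simp [hSgt, hSlt]
    calc (lam.prod lam) Slt = (lam.prod lam) (Prod.swap ⁻¹' Sgt) := by rw [hpre]
      _ = ((lam.prod lam).map Prod.swap) Sgt := (Measure.map_apply measurable_swap hgtm).symm
      _ = (lam.prod lam) Sgt := by rw [Measure.prod_swap]
  have huniv2 : (lam.prod lam) Set.univ = lam Set.univ * lam Set.univ := by
    rw [← Set.univ_prod_univ, Measure.prod_prod]
  have hle : lam.prod lam ≤ μ.prod ν := prod_measure_mono h1 h2
  -- convert to real numbers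
  have hfinμν : IsProbabilityMeasure (μ.prod ν) := by infer_instance
  have htoR : ∀ X : Set (ℝ × ℝ), ((lam.prod lam) X).toReal ≤ ((μ.prod ν) X).toReal :=
    fun X => ENNReal.toReal_mono (measure_ne_top _ _) (Measure.le_iff'.mp hle X)
  have hpart1 : ((μ.prod ν) Sgt).toReal + ((μ.prod ν) Slt).toReal
      + ((μ.prod ν) Seq).toReal = 1 := by
    have := congrArg ENNReal.toReal (hpart (μ.prod ν))
    rw [measure_univ, ENNReal.toReal_one, ENNReal.toReal_add, ENNReal.toReal_add] at this <;>
      first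
        | linarith
        | exact measure_ne_top _ _
        | exact ENNReal.add_ne_top.mpr ⟨measure_ne_top _ _, measure_ne_top _ _⟩
  have hpart2 : ((lam.prod lam) Sgt).toReal + ((lam.prod lam) Slt).toReal
      + ((lam.prod lam) Seq).toReal = ((lam Set.univ).toReal) ^ 2 := by
    have := congrArg ENNReal.toReal (hpart (lam.prod lam))
    rw [huniv2, ENNReal.toReal_mul] at this
    rw [ENNReal.toReal_add, ENNReal.toReal_add] at this
    · rw [← this]; ring
    all_goals
      first
        | exact measure_ne_top _ _
        | exact ENNReal.add_ne_top.mpr ⟨measure_ne_top _ _, measure_ne_top _ _⟩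
  have hswapR : ((lam.prod lam) Slt).toReal = ((lam.prod lam) Sgt).toReal := by rw [hswap]
  have hbb := htoR Slt
  have hee := htoR Seq
  linarith

theorem auroc_product_le {S : Type*} [MeasurableSpace S]
    (m h : Measure S) [IsProbabilityMeasure m] [IsProbabilityMeasure h]
    (δ : ℝ) (hδ : tv m h = δ) (hδ0 : 0 ≤ δ) (hδ1 : δ ≤ 1)
    (N : ℕ) (hN : 0 < N) (s : (Fin N → S) → ℝ) (hs : Measurable s) :
    ((((Measure.pi fun _ : Fin N => m).map s).prod
        ((Measure.pi fun _ : Fin N => h).map s)) {p : ℝ × ℝ | p.2 < p.1}).toReal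
      + (1 / 2) * ((((Measure.pi fun _ : Fin N => m).map s).prod
        ((Measure.pi fun _ : Fin N => h).map s)) {p : ℝ × ℝ | p.1 = p.2}).toReal
      ≤ 1 - (1 / 2) * (1 - δ) ^ (2 * N) := by
  obtain ⟨lam0, hl1, hl2, hmass⟩ := tv_overlap m h
  haveI : IsFiniteMeasure lam0 := isFiniteMeasure_of_le m hl1
  set lam : Measure ℝ := (Measure.pi fun _ : Fin N => lam0).map s with hlamdef
  haveI : IsProbabilityMeasure ((Measure.pi fun _ : Fin N => m).map s) :=
    Measure.isProbabilityMeasure_map hs.aemeasurable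
  haveI : IsProbabilityMeasure ((Measure.pi fun _ : Fin N => h).map s) :=
    Measure.isProbabilityMeasure_map hs.aemeasurable
  have h1 : lam ≤ (Measure.pi fun _ : Fin N => m).map s :=
    Measure.map_mono (pi_measure_mono fun _ => hl1) hs
  have h2 : lam ≤ (Measure.pi fun _ : Fin N => h).map s :=
    Measure.map_mono (pi_measure_mono fun _ => hl2) hs
  refine le_trans (auroc_le_of_minorant _ _ lam h1 h2) ?_
  have hδ' : (0 : ℝ) ≤ 1 - δ := by linarith
  have hc : 1 - δ ≤ (lam0 Set.univ).toReal := by rw [← hδ]; exact hmass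
  have hlamuniv : (lam Set.univ).toReal = ((lam0 Set.univ).toReal) ^ N := by
    rw [hlamdef, Measure.map_apply hs MeasurableSet.univ, Set.preimage_univ,
      Measure.pi_univ, Finset.prod_const, Finset.card_univ, Fintype.card_fin,
      ENNReal.toReal_pow]
  have hkey : (1 - δ) ^ (2 * N) ≤ ((lam Set.univ).toReal) ^ 2 := by
    rw [hlamuniv, mul_comm 2 N, pow_mul]
    exact pow_le_pow_left₀ (pow_nonneg hδ' N) (pow_le_pow_left₀ hδ' hc N) 2
  linarith
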